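/- Let n ≥ 2 and let b be a symmetric n×n positive semidefinite real matrix with eigenvalues λ₁ ≤ … ≤ λₙ, trace B > 0, and ‖b‖² = Σλᵢ². Suppose ‖b‖² - B²/n = c₀B² with 0 < c₀ < 1/(n(n-1)). Then tr(b³) - (1/n + c₀)·B·‖b‖² ≥ c₀(1/n + c₀)(1 - √(n(n-1)c₀))·B³ > 0. -/

import Mathlib

set_option maxHeartbeats 1000000

open Finset

/-- Scalar core: sharp lower bound for the sum of cubes of a traceless tuple. -/
lemma aux_cube_bound (n : ℕ) (hn : 2 ≤ n) (μ : Fin n → ℝ) (B c₀ : ℝ)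
    (hB : 0 < B) (hc : 0 < c₀)
    (h1 : ∑ i, μ i = 0) (h2 : ∑ i, μ i ^ 2 = c₀ * B ^ 2) :
    ∑ i, μ i ^ 3 ≥
      c₀ * B ^ 3 * (2 * c₀ - (1 / (n : ℝ) + c₀) * Real.sqrt ((n : ℝ) * ((n : ℝ) - 1) * c₀)) := by
  have hN : (2 : ℝ) ≤ (n : ℝ) := by exact_mod_cast hn
  set N : ℝ := (n : ℝ) with hNdef
  have hN0 : 0 < N := by linarith
  have hN1 : 0 < N - 1 := by linarith
  clear_value N
  set r : ℝ := Real.sqrt (N * (N - 1) * c₀) with hrdef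
  have hr2 : r ^ 2 = N * (N - 1) * c₀ := Real.sq_sqrt (by positivity)
  have hrpos : 0 < r := Real.sqrt_pos.mpr (by positivity)
  clear_value r
  -- minimum entry
  have hne : (Finset.univ : Finset (Fin n)).Nonempty :=
    ⟨⟨0, by omega⟩, Finset.mem_univ _⟩
  obtain ⟨i₀, -, hmin⟩ := Finset.exists_min_image Finset.univ μ hne
  set m : ℝ := μ i₀ with hmdef
  have hm_le : ∀ j, m ≤ μ j := fun j => hmin j (Finset.mem_univ j)
  clear_value m
  have hmneg : m < 0 := by
    by_contra h
    push_neg at h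
    have hall : ∀ j ∈ Finset.univ, μ j = 0 :=
      (Finset.sum_eq_zero_iff_of_nonneg (fun j _ => le_trans h (hm_le j))).1 h1
    have : ∑ i, μ i ^ 2 = 0 := by
      apply Finset.sum_eq_zero
      intro j hj
      rw [hall j hj]; ring
    nlinarith [mul_pos hc (pow_pos hB 2)]
  -- Cauchy-Schwarz on the other entries
  have hCS : N * m ^ 2 ≤ (N - 1) * (c₀ * B ^ 2) := by
    have hsum : ∑ j ∈ Finset.univ.erase i₀, μ j = -m := by
      have h := Finset.add_sum_erase Finset.univ μ (Finset.mem_univ i₀)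
      rw [h1] at h
      rw [hmdef]
      linarith [h]
    have hsumsq : ∑ j ∈ Finset.univ.erase i₀, μ j ^ 2 = c₀ * B ^ 2 - m ^ 2 := by
      have h := Finset.add_sum_erase Finset.univ (fun j => μ j ^ 2) (Finset.mem_univ i₀)
      rw [h2] at h
      rw [hmdef]
      linarith [h]
    have hcard : ((Finset.univ.erase i₀).card : ℝ) = N - 1 := by
      rw [hNdef, Finset.card_erase_of_mem (Finset.mem_univ i₀)]
      simp only [Finset.card_univ, Fintype.card_fin]
      have : 1 ≤ n := by omega
      push_cast [Nat.cast_sub this]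
      ring
    have := sq_sum_le_card_mul_sum_sq (s := Finset.univ.erase i₀) (f := μ)
    rw [hsum, hsumsq, hcard] at this
    nlinarith [this]
  have h5 : 0 ≤ r * B + N * m := by
    have h6 : 0 < r * B - N * m := by
      nlinarith [mul_pos hrpos hB, mul_pos hN0 (neg_pos.mpr hmneg)]
    have h8 := mul_le_mul_of_nonneg_left hCS hN0.le
    have h9 : r ^ 2 * B ^ 2 = N * ((N - 1) * (c₀ * B ^ 2)) := by rw [hr2]; ring
    nlinarith [h6, h8, h9]
  -- the key nonnegative sum with a = r*B/(N*(N-1))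
  set a : ℝ := r * B / (N * (N - 1)) with hadef
  have haP : a * (N * (N - 1)) = r * B := by
    rw [hadef]; field_simp
  clear_value a
  have hkey : 0 ≤ ∑ i, (μ i - m) * (μ i - a) ^ 2 := by
    apply Finset.sum_nonneg
    intro i _
    exact mul_nonneg (by linarith [hm_le i]) (sq_nonneg _)
  have hexpand : ∑ i, (μ i - m) * (μ i - a) ^ 2 =
      (∑ i, μ i ^ 3) - (2 * a + m) * (∑ i, μ i ^ 2)
      + (a ^ 2 + 2 * a * m) * (∑ i, μ i) - N * (a ^ 2 * m) := by
    have e : ∀ i, (μ i - m) * (μ i - a) ^ 2 =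
        μ i ^ 3 - (2 * a + m) * μ i ^ 2 + (a ^ 2 + 2 * a * m) * μ i - a ^ 2 * m := by
      intro i; ring
    rw [hNdef, Finset.sum_congr rfl (fun i _ => e i)]
    rw [Finset.sum_sub_distrib, Finset.sum_add_distrib, Finset.sum_sub_distrib,
      ← Finset.mul_sum, ← Finset.mul_sum, Finset.sum_const, Finset.card_univ,
      Fintype.card_fin, nsmul_eq_mul]
  have hT3 : (∑ i, μ i ^ 3) ≥ (2 * a + m) * (c₀ * B ^ 2) + N * (a ^ 2 * m) := by
    rw [hexpand, h1, h2] at hkey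
    linarith
  have hσa : (0:ℝ) ≤ c₀ * B ^ 2 + N * a ^ 2 := by positivity
  have hstep : N * (∑ i, μ i ^ 3) ≥
      2 * a * (c₀ * B ^ 2) * N + (-(r * B)) * (c₀ * B ^ 2 + N * a ^ 2) := by
    have hp1 := mul_le_mul_of_nonneg_left hT3 hN0.le
    have hp2 := mul_le_mul_of_nonneg_right (by linarith : -(r * B) ≤ N * m) hσa
    nlinarith [hp1, hp2]
  have hY : (0:ℝ) ≤ N * B ^ 3 * r ^ 3 * (1 - r) ^ 2 := by positivity
  have hG : (2 * a * (c₀ * B ^ 2) * N - r * B * (c₀ * B ^ 2 + N * a ^ 2)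
      - c₀ * B ^ 3 * (2 * c₀ * N - (1 + c₀ * N) * r)) * (N * (N - 1)) ^ 2
      = N * B ^ 3 * r ^ 3 * (1 - r) ^ 2 := by
    linear_combination (2 * c₀ * B ^ 2 * N ^ 2 * (N - 1)
        - r * B * N * (r * B + a * N * (N - 1))) * haP
      + (B ^ 3 * N * (-2 * r + 4 * r ^ 2 - 2 * r ^ 3)
        + B ^ 3 * N * (r - 2) * (r ^ 2 - N * (N - 1) * c₀)) * hr2
  have hD2 : (0:ℝ) < (N * (N - 1)) ^ 2 := by positivity
  have hstep3 : 2 * a * (c₀ * B ^ 2) * N + (-(r * B)) * (c₀ * B ^ 2 + N * a ^ 2)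
      ≥ c₀ * B ^ 3 * (2 * c₀ * N - (1 + c₀ * N) * r) := by
    nlinarith [hG, hD2, hY]
  have hNinv : N * (1 / N) = 1 := mul_one_div_cancel hN0.ne'
  have hNtar : N * (c₀ * B ^ 3 * (2 * c₀ - (1 / N + c₀) * r))
      = c₀ * B ^ 3 * (2 * c₀ * N - (1 + c₀ * N) * r) := by
    linear_combination (-(c₀ * B ^ 3 * r)) * hNinv
  have hNT : N * (c₀ * B ^ 3 * (2 * c₀ - (1 / N + c₀) * r)) ≤ N * (∑ i, μ i ^ 3) := by
    rw [hNtar]; linarith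
  exact le_of_mul_le_mul_left hNT hN0

/-- (Andrews–McCoy, Lemma 2.3.) If a symmetric positive semidefinite matrix `b`
with `B = tr b > 0` satisfies `tr(b²) - B²/n = c₀B²` with
`0 < c₀ < 1/(n(n-1))`, then
`tr(b³) - (1/n + c₀)·B·tr(b²) ≥ c₀(1/n + c₀)(1 - √(n(n-1)c₀))·B³ > 0`. -/
theorem cubic_pinching_estimate (n : ℕ) (hn : 2 ≤ n)
    (b : Matrix (Fin n) (Fin n) ℝ) (hsymm : b.IsSymm) (hpsd : b.PosSemidef)
    (c₀ : ℝ) (hc₀ : 0 < c₀) (hc₀' : c₀ < 1 / (n * (n - 1) : ℝ))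
    (hB : 0 < Matrix.trace b)
    (hpinch : Matrix.trace (b * b) - (Matrix.trace b) ^ 2 / n =
      c₀ * (Matrix.trace b) ^ 2) :
    Matrix.trace (b * b * b) - (1 / n + c₀) * Matrix.trace b * Matrix.trace (b * b) ≥
      c₀ * (1 / n + c₀) * (1 - Real.sqrt (n * (n - 1) * c₀)) * (Matrix.trace b) ^ 3 ∧
    0 < c₀ * (1 / n + c₀) * (1 - Real.sqrt (n * (n - 1) * c₀)) * (Matrix.trace b) ^ 3 := by
  classical
  have he : b.IsHermitian := hpsd.1
  set U : Matrix (Fin n) (Fin n) ℝ := (he.eigenvectorUnitary : Matrix (Fin n) (Fin n) ℝ)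
    with hUdef
  set lam : Fin n → ℝ := he.eigenvalues with hlamdef
  have hUU : star U * U = 1 := Matrix.UnitaryGroup.star_mul_self _
  have hspec : b = U * Matrix.diagonal lam * star U := by
    have h := he.spectral_theorem
    simpa [RCLike.ofReal_real_eq_id] using h
  have hmul : ∀ X Y : Matrix (Fin n) (Fin n) ℝ,
      (U * X * star U) * (U * Y * star U) = U * (X * Y) * star U := by
    intro X Y
    calc (U * X * star U) * (U * Y * star U)
        = U * (X * ((star U * U) * (Y * star U))) := by simp only [mul_assoc]
      _ = U * (X * Y) * star U := by rw [hUU, one_mul]; simp only [mul_assoc]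
  have htr : ∀ M : Matrix (Fin n) (Fin n) ℝ,
      Matrix.trace (U * M * star U) = Matrix.trace M := by
    intro M
    rw [Matrix.trace_mul_cycle, hUU, one_mul]
  have hbb : b * b = U * (Matrix.diagonal lam * Matrix.diagonal lam) * star U := by
    conv_lhs => rw [hspec]
    rw [hmul]
  have hbbb : b * b * b =
      U * (Matrix.diagonal lam * Matrix.diagonal lam * Matrix.diagonal lam) * star U := by
    rw [hbb]
    conv_lhs => rw [hspec]
    rw [hmul]
  have h1 : Matrix.trace b = ∑ i, lam i := by
    rw [hspec, htr, Matrix.trace_diagonal]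
  have h2 : Matrix.trace (b * b) = ∑ i, lam i ^ 2 := by
    rw [hbb, htr, Matrix.diagonal_mul_diagonal, Matrix.trace_diagonal]
    exact Finset.sum_congr rfl fun i _ => by simp [Pi.mul_apply, pow_two]
  have h3 : Matrix.trace (b * b * b) = ∑ i, lam i ^ 3 := by
    rw [hbbb, htr, Matrix.diagonal_mul_diagonal, Matrix.diagonal_mul_diagonal,
      Matrix.trace_diagonal]
    exact Finset.sum_congr rfl fun i _ => by simp [Pi.mul_apply, pow_succ, pow_two]
  -- scalar reduction
  have hN : (2 : ℝ) ≤ (n : ℝ) := by exact_mod_cast hn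
  have hN0 : (0 : ℝ) < (n : ℝ) := by linarith
  rw [h1] at hB
  rw [h1, h2] at hpinch
  rw [h1, h2, h3]
  set B : ℝ := ∑ i, lam i with hBdef
  have hBpos : 0 < B := hB
  have hS : (∑ i, lam i ^ 2) = c₀ * B ^ 2 + B ^ 2 / (n : ℝ) := by linarith [hpinch]
  set μ : Fin n → ℝ := fun i => lam i - B / (n : ℝ) with hμdef
  have hμ1 : ∑ i, μ i = 0 := by
    rw [hμdef]
    rw [Finset.sum_sub_distrib, Finset.sum_const, Finset.card_univ, Fintype.card_fin,
      nsmul_eq_mul]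
    field_simp
    linarith [hBdef]
  have hμ2 : ∑ i, μ i ^ 2 = c₀ * B ^ 2 := by
    have e : ∀ i, μ i ^ 2 = lam i ^ 2 - (2 * B / (n : ℝ)) * lam i + (B / (n : ℝ)) ^ 2 := by
      intro i; rw [hμdef]; ring
    rw [Finset.sum_congr rfl fun i _ => e i, Finset.sum_add_distrib, Finset.sum_sub_distrib,
      ← Finset.mul_sum, Finset.sum_const, Finset.card_univ, Fintype.card_fin, nsmul_eq_mul,
      hS]
    field_simp
    ring
  have hμ3sum : ∑ i, μ i ^ 3 = (∑ i, lam i ^ 3) - (3 * B / (n : ℝ)) * (∑ i, lam i ^ 2)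
      + (3 * B ^ 2 / (n : ℝ) ^ 2) * (∑ i, lam i) - (n : ℝ) * (B / (n : ℝ)) ^ 3 := by
    have e : ∀ i, μ i ^ 3 = lam i ^ 3 - (3 * B / (n : ℝ)) * lam i ^ 2
        + (3 * B ^ 2 / (n : ℝ) ^ 2) * lam i - (B / (n : ℝ)) ^ 3 := by
      intro i; rw [hμdef]; ring
    rw [Finset.sum_congr rfl fun i _ => e i, Finset.sum_sub_distrib, Finset.sum_add_distrib,
      Finset.sum_sub_distrib, ← Finset.mul_sum, ← Finset.mul_sum, Finset.sum_const,
      Finset.card_univ, Fintype.card_fin, nsmul_eq_mul]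
  have hμ3 := aux_cube_bound n hn μ B c₀ hBpos hc₀ hμ1 hμ2
  have hkeyid : (∑ i, lam i ^ 3) - (1 / (n : ℝ) + c₀) * B * (∑ i, lam i ^ 2)
      = (∑ i, μ i ^ 3) + (c₀ / (n : ℝ) - c₀ ^ 2) * B ^ 3 := by
    rw [hμ3sum, hS]
    field_simp
    ring
  -- r < 1
  have hprod : ((n : ℝ) * ((n : ℝ) - 1)) * c₀ < 1 := by
    rw [lt_div_iff₀ (by nlinarith : (0:ℝ) < (n : ℝ) * ((n : ℝ) - 1))] at hc₀'
    nlinarith [hc₀']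
  have hrsq : Real.sqrt ((n : ℝ) * ((n : ℝ) - 1) * c₀) ^ 2 = (n : ℝ) * ((n : ℝ) - 1) * c₀ :=
    Real.sq_sqrt
    (by nlinarith [mul_pos (mul_pos hN0 (by linarith : (0:ℝ) < (n:ℝ) - 1)) hc₀])
  have hrlt1 : Real.sqrt ((n : ℝ) * ((n : ℝ) - 1) * c₀) < 1 := by
    nlinarith [Real.sqrt_nonneg ((n : ℝ) * ((n : ℝ) - 1) * c₀), hrsq, hprod]
  constructor
  · have hring : c₀ * B ^ 3 * (2 * c₀ - (1 / (n : ℝ) + c₀) *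
        Real.sqrt ((n : ℝ) * ((n : ℝ) - 1) * c₀)) + (c₀ / (n : ℝ) - c₀ ^ 2) * B ^ 3
        = c₀ * (1 / (n : ℝ) + c₀) * (1 - Real.sqrt ((n : ℝ) * ((n : ℝ) - 1) * c₀)) * B ^ 3 := by
      ring
    linarith [hμ3, hkeyid, hring]
  · have h1n : (0 : ℝ) < 1 / (n : ℝ) + c₀ := by positivity
    have hB3 : (0 : ℝ) < B ^ 3 := by positivity
    exact mul_pos (mul_pos (mul_pos hc₀ h1n) (by linarith)) hB3
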